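/- Let m ≥ 1 and suppose X follows a binomial distribution with parameters n and p. Then E|X - np|^{2m} ≤ 2(3mnp + m²)^m. -/
import Mathlib


open Finset

/-- `y^s ≤ s^s e^(y-s)` for `y ≥ 0`, `s > 0` (real powers). -/
lemma aux_rpow_le (y s : ℝ) (hy : 0 ≤ y) (hs : 0 < s) :
    y ^ s ≤ s ^ s * Real.exp (y - s) := by
  rcases eq_or_lt_of_le hy with h | h
  · rw [← h, Real.zero_rpow hs.ne']
    positivity
  · have h1 : Real.log (y / s) ≤ y / s - 1 := Real.log_le_sub_one_of_pos (by positivity)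
    have h4 : Real.log y - Real.log s ≤ y / s - 1 := by
      rw [← Real.log_div h.ne' hs.ne']; exact h1
    have h5 := mul_le_mul_of_nonneg_left h4 hs.le
    have hss : s * (y / s) = y := by field_simp
    rw [Real.rpow_def_of_pos h, Real.rpow_def_of_pos hs, ← Real.exp_add, Real.exp_le_exp]
    nlinarith
  
/-- Binomial MGF identity. -/
lemma aux_mgf_eq (n : ℕ) (p c : ℝ) :
    ∑ j ∈ Finset.range (n + 1),
        ((n.choose j : ℝ) * p ^ j * (1 - p) ^ (n - j)) * Real.exp (c * j)
      = (p * Real.exp c + (1 - p)) ^ n := by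
  rw [add_pow]
  apply Finset.sum_congr rfl
  intro j hj
  rw [mul_pow, ← Real.exp_nat_mul]
  ring_nf

/-- Binomial MGF bound. -/
lemma aux_mgf_le (n : ℕ) (p c : ℝ) (hp0 : 0 ≤ p) (hp1 : p ≤ 1) :
    (p * Real.exp c + (1 - p)) ^ n ≤ Real.exp ((n : ℝ) * p * (Real.exp c - 1)) := by
  have hb : 0 ≤ p * Real.exp c + (1 - p) := by
    have := Real.exp_pos c; nlinarith
  have h2 : p * Real.exp c + (1 - p) ≤ Real.exp (p * (Real.exp c - 1)) := by
    have := Real.add_one_le_exp (p * (Real.exp c - 1)); linarith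
  calc (p * Real.exp c + (1 - p)) ^ n ≤ (Real.exp (p * (Real.exp c - 1))) ^ n :=
        pow_le_pow_left₀ hb h2 n
    _ = Real.exp ((n : ℝ) * (p * (Real.exp c - 1))) := (Real.exp_nat_mul _ n).symm
    _ = _ := by ring_nf

lemma aux_exp_le_quad (x : ℝ) (h0 : 0 ≤ x) (h2 : x ≤ 2) :
    Real.exp x ≤ 1 + x + (3 / 2) * x ^ 2 := by
  have hy0 : 0 ≤ x / 2 := by linarith
  have hy1 : |x / 2| ≤ 1 := by rw [abs_of_nonneg hy0]; linarith
  have h := Real.exp_bound hy1 (n := 2) (by norm_num)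
  have hsum : ∑ i ∈ Finset.range 2, (x / 2) ^ i / (i.factorial : ℝ) = 1 + x / 2 := by
    simp [Finset.sum_range_succ]
  rw [hsum] at h
  have h3 : Real.exp (x / 2) ≤ 1 + x / 2 + (3 / 4) * (x / 2) ^ 2 := by
    have := abs_le.mp h
    have habs : |x / 2| ^ 2 = (x / 2) ^ 2 := by rw [abs_of_nonneg hy0]
    rw [habs] at this
    norm_num at this ⊢
    linarith [this.2]
  have hx2 : Real.exp x = Real.exp (x / 2) ^ 2 := by
    rw [← Real.exp_nat_mul]; congr 1; push_cast; ring
  have hep : 0 < Real.exp (x / 2) := Real.exp_pos _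
  have h4 : Real.exp (x / 2) ^ 2 ≤ (1 + x / 2 + (3 / 4) * (x / 2) ^ 2) ^ 2 :=
    pow_le_pow_left₀ hep.le h3 2
  rw [hx2]
  nlinarith [h4, mul_nonneg (sq_nonneg x) (sub_nonneg.mpr h2),
    mul_nonneg (mul_nonneg (sq_nonneg x) h0) (sub_nonneg.mpr h2), sq_nonneg x]

lemma aux_exp_neg_le (x : ℝ) (h0 : 0 ≤ x) :
    Real.exp (-x) ≤ 1 - x + (3 / 2) * x ^ 2 := by
  have h1 : 1 + x ≤ Real.exp x := by linarith [Real.add_one_le_exp x]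
  have hep : 0 < Real.exp x := Real.exp_pos x
  have h2 : Real.exp (-x) = (Real.exp x)⁻¹ := Real.exp_neg x
  have h3 : (Real.exp x)⁻¹ ≤ (1 + x)⁻¹ := by
    apply inv_anti₀ (by linarith) h1
  have h4 : (1 + x)⁻¹ ≤ 1 - x + x ^ 2 := by
    rw [inv_le_iff_one_le_mul₀ (by linarith)]
    nlinarith
  rw [h2]
  nlinarith

set_option maxHeartbeats 1000000 in
/-- For a binomial random variable `X` with parameters `n, p` and real `m ≥ 1`,
`E|X - np|^{2m} ≤ 2(3mnp + m²)^m`. -/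
theorem stmt10 (n : ℕ) (p : ℝ) (hp0 : 0 ≤ p) (hp1 : p ≤ 1) (m : ℝ) (hm : 1 ≤ m) :
    ∑ j ∈ Finset.range (n + 1),
        ((n.choose j : ℝ) * p ^ j * (1 - p) ^ (n - j)) * |(j : ℝ) - n * p| ^ (2 * m)
      ≤ 2 * (3 * m * n * p + m ^ 2) ^ m := by
  set μ : ℝ := (n : ℝ) * p with hμdef
  have hμ : 0 ≤ μ := by positivity
  set A : ℝ := 3 * m * n * p + m ^ 2 with hAdef
  have hA1 : (1 : ℝ) ≤ A := by nlinarith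
  have hApos : 0 < A := by linarith
  set t : ℝ := Real.sqrt A with htdef
  have ht2 : t ^ 2 = A := Real.sq_sqrt hApos.le
  have htm : m ≤ t := by
    have hmn : (0:ℝ) ≤ m := by linarith
    nlinarith [ht2, Real.sqrt_nonneg A, hμ]
  have ht0 : 0 < t := lt_of_lt_of_le (by linarith) htm
  set lam : ℝ := 2 * m / t with hlamdef
  have hlam0 : 0 < lam := by positivity
  have hlam2 : lam ≤ 2 := by
    rw [hlamdef, div_le_iff₀ ht0]; linarith
  have hlamt : lam * t = 2 * m := by
    rw [hlamdef]; field_simp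
  -- pointwise bound
  have key : ∀ x : ℝ, |x| ^ (2 * m)
      ≤ t ^ (2 * m) * (Real.exp (-(2 * m)) * (Real.exp (lam * x) + Real.exp (-(lam * x)))) := by
    intro x
    have h1 : (lam * |x|) ^ (2 * m) ≤ (2 * m) ^ (2 * m) * Real.exp (lam * |x| - 2 * m) :=
      aux_rpow_le _ _ (by positivity) (by linarith)
    have h2 : (lam * |x|) ^ (2 * m) = lam ^ (2 * m) * |x| ^ (2 * m) :=
      Real.mul_rpow hlam0.le (abs_nonneg x)
    have h4 : (2 * m) ^ (2 * m) = lam ^ (2 * m) * t ^ (2 * m) := by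
      rw [← Real.mul_rpow hlam0.le ht0.le, hlamt]
    have h5 : lam ^ (2 * m) * |x| ^ (2 * m)
        ≤ lam ^ (2 * m) * (t ^ (2 * m) * Real.exp (lam * |x| - 2 * m)) := by
      rw [← h2]
      calc (lam * |x|) ^ (2 * m) ≤ (2 * m) ^ (2 * m) * Real.exp (lam * |x| - 2 * m) := h1
        _ = lam ^ (2 * m) * (t ^ (2 * m) * Real.exp (lam * |x| - 2 * m)) := by
            rw [h4]; ring
    have hlp : (0 : ℝ) < lam ^ (2 * m) := Real.rpow_pos_of_pos hlam0 _
    have h6 : |x| ^ (2 * m) ≤ t ^ (2 * m) * Real.exp (lam * |x| - 2 * m) :=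
      le_of_mul_le_mul_left h5 hlp
    have h7 : Real.exp (lam * |x|) ≤ Real.exp (lam * x) + Real.exp (-(lam * x)) := by
      rcases abs_cases x with ⟨h, _⟩ | ⟨h, _⟩
      · rw [h]; linarith [(Real.exp_pos (-(lam * x))).le]
      · rw [h, show lam * -x = -(lam * x) by ring]
        linarith [(Real.exp_pos (lam * x)).le]
    calc |x| ^ (2 * m) ≤ t ^ (2 * m) * Real.exp (lam * |x| - 2 * m) := h6
      _ = t ^ (2 * m) * (Real.exp (-(2 * m)) * Real.exp (lam * |x|)) := by
          rw [← Real.exp_add]; ring_nf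
      _ ≤ t ^ (2 * m) * (Real.exp (-(2 * m)) * (Real.exp (lam * x) + Real.exp (-(lam * x)))) := by
          have htp : (0 : ℝ) ≤ t ^ (2 * m) := (Real.rpow_pos_of_pos ht0 _).le
          have hep : (0 : ℝ) ≤ Real.exp (-(2 * m)) := (Real.exp_pos _).le
          apply mul_le_mul_of_nonneg_left _ htp
          exact mul_le_mul_of_nonneg_left h7 hep
  -- sum bound
  have hpmf : ∀ j, 0 ≤ (n.choose j : ℝ) * p ^ j * (1 - p) ^ (n - j) := by
    intro j
    have : (0:ℝ) ≤ 1 - p := by linarith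
    positivity
  have step1 : ∑ j ∈ Finset.range (n + 1),
        ((n.choose j : ℝ) * p ^ j * (1 - p) ^ (n - j)) * |(j : ℝ) - μ| ^ (2 * m)
      ≤ t ^ (2 * m) * Real.exp (-(2 * m)) *
        ((∑ j ∈ Finset.range (n + 1),
          ((n.choose j : ℝ) * p ^ j * (1 - p) ^ (n - j)) * Real.exp (lam * ((j : ℝ) - μ)))
        + (∑ j ∈ Finset.range (n + 1),
          ((n.choose j : ℝ) * p ^ j * (1 - p) ^ (n - j)) * Real.exp (-lam * ((j : ℝ) - μ)))) := by
    rw [← Finset.sum_add_distrib, Finset.mul_sum]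
    apply Finset.sum_le_sum
    intro j hj
    have := key ((j : ℝ) - μ)
    calc ((n.choose j : ℝ) * p ^ j * (1 - p) ^ (n - j)) * |(j : ℝ) - μ| ^ (2 * m)
        ≤ ((n.choose j : ℝ) * p ^ j * (1 - p) ^ (n - j)) *
          (t ^ (2 * m) * (Real.exp (-(2 * m)) *
            (Real.exp (lam * ((j : ℝ) - μ)) + Real.exp (-(lam * ((j : ℝ) - μ)))))) :=
          mul_le_mul_of_nonneg_left this (hpmf j)
      _ = t ^ (2 * m) * Real.exp (-(2 * m)) *
          (((n.choose j : ℝ) * p ^ j * (1 - p) ^ (n - j)) * Real.exp (lam * ((j : ℝ) - μ))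
          + ((n.choose j : ℝ) * p ^ j * (1 - p) ^ (n - j)) * Real.exp (-lam * ((j : ℝ) - μ))) := by
          rw [show ∀ a b : ℝ, -lam * (a - b) = -(lam * (a - b)) from fun a b => by ring]
          ring
  -- MGF bounds: for c = lam and c = -lam
  have mgf_bound : ∀ c : ℝ, Real.exp c - 1 - c ≤ (3 / 2) * lam ^ 2 →
      ∑ j ∈ Finset.range (n + 1),
        ((n.choose j : ℝ) * p ^ j * (1 - p) ^ (n - j)) * Real.exp (c * ((j : ℝ) - μ))
      ≤ Real.exp ((3 / 2) * (n * p) * lam ^ 2) := by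
    intro c hc
    have heq : ∑ j ∈ Finset.range (n + 1),
        ((n.choose j : ℝ) * p ^ j * (1 - p) ^ (n - j)) * Real.exp (c * ((j : ℝ) - μ))
        = Real.exp (-(c * μ)) * ∑ j ∈ Finset.range (n + 1),
          ((n.choose j : ℝ) * p ^ j * (1 - p) ^ (n - j)) * Real.exp (c * j) := by
      rw [Finset.mul_sum]
      apply Finset.sum_congr rfl
      intro j hj
      rw [show c * ((j : ℝ) - μ) = -(c * μ) + c * j by ring, Real.exp_add]
      ring
    rw [heq, aux_mgf_eq]
    calc Real.exp (-(c * μ)) * (p * Real.exp c + (1 - p)) ^ n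
        ≤ Real.exp (-(c * μ)) * Real.exp ((n : ℝ) * p * (Real.exp c - 1)) :=
          mul_le_mul_of_nonneg_left (aux_mgf_le n p c hp0 hp1) (Real.exp_pos _).le
      _ = Real.exp ((n : ℝ) * p * (Real.exp c - 1 - c)) := by
          rw [← Real.exp_add]; congr 1; rw [hμdef]; ring
      _ ≤ Real.exp ((3 / 2) * (n * p) * lam ^ 2) := by
          rw [Real.exp_le_exp]
          have hnp : (0 : ℝ) ≤ (n : ℝ) * p := by positivity
          calc (n : ℝ) * p * (Real.exp c - 1 - c) ≤ (n : ℝ) * p * ((3/2) * lam ^ 2) :=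
                mul_le_mul_of_nonneg_left hc hnp
            _ = (3 / 2) * (n * p) * lam ^ 2 := by ring
  have hb1 : Real.exp lam - 1 - lam ≤ (3 / 2) * lam ^ 2 := by
    have := aux_exp_le_quad lam hlam0.le hlam2
    linarith
  have hb2 : Real.exp (-lam) - 1 - (-lam) ≤ (3 / 2) * lam ^ 2 := by
    have := aux_exp_neg_le lam hlam0.le
    linarith
  have hM1 := mgf_bound lam hb1
  have hM2 := mgf_bound (-lam) hb2
  -- exponent bound: (3/2) np lam² ≤ 2m
  have hexp : (3 / 2) * ((n : ℝ) * p) * lam ^ 2 ≤ 2 * m := by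
    have hnp : (0 : ℝ) ≤ (n : ℝ) * p := by positivity
    have hl2 : lam ^ 2 * t ^ 2 = 4 * m ^ 2 := by nlinarith [hlamt]
    have hA2 : lam ^ 2 * A = 4 * m ^ 2 := by rw [← ht2]; exact hl2
    have e1 : (3 / 2) * ((n : ℝ) * p) * lam ^ 2 * A = 6 * ((n : ℝ) * p) * m ^ 2 := by
      linear_combination (3 / 2 * ((n : ℝ) * p)) * hA2
    have e2 : 2 * m * A = 6 * ((n : ℝ) * p) * m ^ 2 + 2 * m ^ 3 := by rw [hAdef]; ring
    have h1 : (3 / 2) * ((n : ℝ) * p) * lam ^ 2 * A ≤ 2 * m * A := by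
      rw [e1, e2]; nlinarith
    exact le_of_mul_le_mul_right h1 hApos
  -- t^(2m) = A^m
  have htA : t ^ (2 * m) = A ^ m := by
    rw [htdef, Real.sqrt_eq_rpow, ← Real.rpow_mul hApos.le]
    congr 1
    ring
  have hSsum : (∑ j ∈ Finset.range (n + 1),
          ((n.choose j : ℝ) * p ^ j * (1 - p) ^ (n - j)) * Real.exp (lam * ((j : ℝ) - μ)))
        + (∑ j ∈ Finset.range (n + 1),
          ((n.choose j : ℝ) * p ^ j * (1 - p) ^ (n - j)) * Real.exp (-lam * ((j : ℝ) - μ)))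
      ≤ 2 * Real.exp ((3 / 2) * ((n : ℝ) * p) * lam ^ 2) := by
    linarith [hM1, hM2]
  have htp : (0 : ℝ) ≤ t ^ (2 * m) := (Real.rpow_pos_of_pos ht0 _).le
  have hfac : (0 : ℝ) ≤ t ^ (2 * m) * Real.exp (-(2 * m)) := by
    have := (Real.exp_pos (-(2 * m))).le; positivity
  calc ∑ j ∈ Finset.range (n + 1),
        ((n.choose j : ℝ) * p ^ j * (1 - p) ^ (n - j)) * |(j : ℝ) - μ| ^ (2 * m)
      ≤ t ^ (2 * m) * Real.exp (-(2 * m)) *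
        ((∑ j ∈ Finset.range (n + 1),
          ((n.choose j : ℝ) * p ^ j * (1 - p) ^ (n - j)) * Real.exp (lam * ((j : ℝ) - μ)))
        + (∑ j ∈ Finset.range (n + 1),
          ((n.choose j : ℝ) * p ^ j * (1 - p) ^ (n - j)) * Real.exp (-lam * ((j : ℝ) - μ)))) :=
        step1
    _ ≤ t ^ (2 * m) * Real.exp (-(2 * m)) *
        (2 * Real.exp ((3 / 2) * ((n : ℝ) * p) * lam ^ 2)) :=
        mul_le_mul_of_nonneg_left hSsum hfac
    _ = 2 * t ^ (2 * m) * Real.exp ((3 / 2) * ((n : ℝ) * p) * lam ^ 2 - 2 * m) := by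
        rw [show (3 / 2) * ((n : ℝ) * p) * lam ^ 2 - 2 * m
            = -(2 * m) + (3 / 2) * ((n : ℝ) * p) * lam ^ 2 by ring, Real.exp_add]
        ring
    _ ≤ 2 * t ^ (2 * m) * 1 := by
        apply mul_le_mul_of_nonneg_left _ (by positivity)
        rw [Real.exp_le_one_iff]
        linarith
    _ = 2 * A ^ m := by rw [mul_one, htA]
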